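/- Let V be a finite-dimensional real vector space, J₀ a complex structure on V, and M ∈ End(V) with M∘J₀ = −J₀∘M. For t ∈ ℝ set g_t := exp(tM) and J_t := g_t∘J₀∘g_t⁻¹. Then: (i) J_t = exp(2tM)∘J₀, and J_t∘J₀ = −exp(2tM); (ii) J_{t/2}∘J₀ = J_t∘J_{t/2}; (iii) the complexification of J_{t/2} maps V_{J₀}^{1,0} into V_{J_t}^{1,0}, i.e. if J₀^ℂ v = i·v for v ∈ V^ℂ then J_t^ℂ (J_{t/2}^ℂ v) = i·(J_{t/2}^ℂ v). (These identities express that J_{t/2}/i realizes the parallel transport of holomorphic subspaces along the geodesic of complex structures from J₀ to J_t.) -/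

import Mathlib

open TensorProduct

set_option maxHeartbeats 1000000 in
set_option synthInstance.maxHeartbeats 200000 in
/-- Let `V` be a finite-dimensional real vector space, `J₀` a complex structure
on `V`, `M` an endomorphism anti-commuting with `J₀`, and for `t ∈ ℝ` set `g_t := exp(tM)` and
`J_t := g_t ∘ J₀ ∘ g_t⁻¹`.  Then (i) `J_t = exp(2tM) ∘ J₀` and `J_t ∘ J₀ = −exp(2tM)`;
(ii) `J_{t/2} ∘ J₀ = J_t ∘ J_{t/2}`; (iii) the complexification of `J_{t/2}` maps
`V_{J₀}^{1,0}` into `V_{J_t}^{1,0}`. -/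
theorem geodesic_parallel_transport_of_holomorphic_subspaces
    {V : Type*} [NormedAddCommGroup V] [NormedSpace ℝ V] [FiniteDimensional ℝ V]
    (J₀ M : V →L[ℝ] V)
    (hJ₀ : J₀ * J₀ = -1)
    (hM : M * J₀ = -(J₀ * M))
    (Jt : ℝ → (V →L[ℝ] V))
    (hJt : ∀ t : ℝ, Jt t =
      NormedSpace.exp (t • M) * J₀ * Ring.inverse (NormedSpace.exp (t • M))) :
    (∀ t : ℝ, Jt t = NormedSpace.exp ((2 * t) • M) * J₀ ∧
        Jt t * J₀ = -(NormedSpace.exp ((2 * t) • M))) ∧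
    (∀ t : ℝ, Jt (t / 2) * J₀ = Jt t * Jt (t / 2)) ∧
    (∀ (t : ℝ) (v : ℂ ⊗[ℝ] V),
      (J₀ : V →ₗ[ℝ] V).baseChange ℂ v = Complex.I • v →
        (Jt t : V →ₗ[ℝ] V).baseChange ℂ ((Jt (t / 2) : V →ₗ[ℝ] V).baseChange ℂ v) =
          Complex.I • ((Jt (t / 2) : V →ₗ[ℝ] V).baseChange ℂ v)) := by
  letI : NormedAlgebra ℚ (V →L[ℝ] V) := .restrictScalars ℚ ℝ (V →L[ℝ] V)
  have hinv : J₀ * -J₀ = 1 := by rw [mul_neg, hJ₀, neg_neg]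
  have hinv' : -J₀ * J₀ = 1 := by rw [neg_mul, hJ₀, neg_neg]
  let u : (V →L[ℝ] V)ˣ := ⟨J₀, -J₀, hinv, hinv'⟩
  -- anticommutation with exponentials
  have key : ∀ s : ℝ, J₀ * NormedSpace.exp (s • M) = NormedSpace.exp (-(s • M)) * J₀ := by
    intro s
    have hJM : J₀ * M = -(M * J₀) := by rw [hM, neg_neg]
    have hc : (u : V →L[ℝ] V) * (s • M) * (↑u⁻¹ : V →L[ℝ] V) = -(s • M) := by
      show J₀ * (s • M) * (-J₀) = -(s • M)
      calc J₀ * (s • M) * (-J₀) = s • (J₀ * M * (-J₀)) := by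
            rw [mul_smul_comm, smul_mul_assoc]
        _ = s • (-(M * J₀) * (-J₀)) := by rw [hJM]
        _ = s • (M * (J₀ * J₀)) := by rw [neg_mul_neg, mul_assoc]
        _ = -(s • M) := by rw [hJ₀, mul_neg_one, smul_neg]
    have h1 := NormedSpace.exp_units_conj u (s • M)
    rw [hc] at h1
    have h1' : NormedSpace.exp (-(s • M))
        = J₀ * NormedSpace.exp (s • M) * (-J₀) := h1
    calc J₀ * NormedSpace.exp (s • M)
        = J₀ * NormedSpace.exp (s • M) * (-J₀ * J₀) := by rw [hinv', mul_one]
      _ = J₀ * NormedSpace.exp (s • M) * (-J₀) * J₀ := by rw [← mul_assoc]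
      _ = NormedSpace.exp (-(s • M)) * J₀ := by rw [← h1']
  have hcomm : ∀ a b : ℝ, Commute (a • M) (b • M) :=
    fun a b => ((Commute.refl M).smul_left a).smul_right b
  have keyJ : ∀ t : ℝ, Jt t = NormedSpace.exp ((2 * t) • M) * J₀ := by
    intro t
    have h1 : J₀ * Ring.inverse (NormedSpace.exp (t • M))
        = NormedSpace.exp (t • M) * J₀ := by
      rw [Ring.inverse_exp]
      have h2 := key (-t)
      rw [neg_smul, neg_neg] at h2
      exact h2
    rw [hJt t, mul_assoc, h1, ← mul_assoc, ← NormedSpace.exp_add_of_commute (hcomm t t),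
      ← add_smul, two_mul]
  have hii : ∀ t : ℝ, Jt (t / 2) * J₀ = Jt t * Jt (t / 2) := by
    intro t
    have hhalf : (2 : ℝ) * (t / 2) = t := by ring
    have lhs : Jt (t / 2) * J₀ = -(NormedSpace.exp (t • M)) := by
      rw [keyJ, mul_assoc, hJ₀, mul_neg_one, hhalf]
    rw [lhs, keyJ t, keyJ (t / 2), hhalf]
    symm
    have h2 : J₀ * NormedSpace.exp (t • M) = NormedSpace.exp ((-t) • M) * J₀ := by
      rw [neg_smul]; exact key t
    have h3 : (2 : ℝ) * t + -t = t := by ring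
    calc NormedSpace.exp ((2 * t) • M) * J₀ * (NormedSpace.exp (t • M) * J₀)
        = NormedSpace.exp ((2 * t) • M) * (J₀ * NormedSpace.exp (t • M)) * J₀ := by
          rw [mul_assoc, mul_assoc, mul_assoc]
      _ = NormedSpace.exp ((2 * t) • M) * (NormedSpace.exp ((-t) • M) * J₀) * J₀ := by
          rw [h2]
      _ = NormedSpace.exp ((2 * t) • M) * NormedSpace.exp ((-t) • M) * (J₀ * J₀) := by
          rw [mul_assoc, mul_assoc, mul_assoc]
      _ = NormedSpace.exp (t • M) * (J₀ * J₀) := by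
          rw [← NormedSpace.exp_add_of_commute (hcomm (2 * t) (-t)), ← add_smul, h3]
      _ = -(NormedSpace.exp (t • M)) := by rw [hJ₀, mul_neg_one]
  refine ⟨fun t => ⟨keyJ t, ?_⟩, hii, ?_⟩
  · rw [keyJ t, mul_assoc, hJ₀, mul_neg_one]
  · intro t v hv
    have hL : ((Jt (t / 2) * J₀ : V →L[ℝ] V) : V →ₗ[ℝ] V)
        = ((Jt t * Jt (t / 2) : V →L[ℝ] V) : V →ₗ[ℝ] V) := by rw [hii t]
    have hL' : (Jt (t / 2) : V →ₗ[ℝ] V).comp (J₀ : V →ₗ[ℝ] V)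
        = (Jt t : V →ₗ[ℝ] V).comp (Jt (t / 2) : V →ₗ[ℝ] V) := by
      rw [ContinuousLinearMap.mul_def, ContinuousLinearMap.mul_def,
        ContinuousLinearMap.toLinearMap_comp, ContinuousLinearMap.toLinearMap_comp] at hL
      exact hL
    have hbc := congrArg (fun f : V →ₗ[ℝ] V => f.baseChange ℂ) hL'
    simp only [LinearMap.baseChange_comp] at hbc
    have happ := congrArg (fun f => f v) hbc
    simp only [LinearMap.comp_apply] at happ
    rw [← happ, hv, map_smul]
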